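/- Let Q, A, D, Y be real matrices of compatible dimensions with Q symmetric positive definite, ν > 0, ε > 0, μ ≥ 0, and suppose the block matrix [[QA + AᵀQ − YD − DᵀYᵀ + (νμ² + 2ε)I, Q], [Q, −νI]] is negative semidefinite. Then, with L = Q⁻¹Y, for every scalar s with |s| ≤ μ/‖B‖ (equivalently for every admissible saturated input) and every ε-vector e ∈ ℝⁿ: eᵀ(Q(A − LD) + (A − LD)ᵀQ)e + 2s·eᵀQBe ≤ −2ε‖e‖², whenever ‖B‖·|s| ≤ μ. -/

import Mathlib

open Matrix

theorem stmt_7 {n p : ℕ} (Q A B : Matrix (Fin n) (Fin n) ℝ)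
    (D : Matrix (Fin p) (Fin n) ℝ) (Y : Matrix (Fin n) (Fin p) ℝ)
    (ν ε μ : ℝ) (hν : 0 < ν) (hε : 0 < ε) (hμ : 0 ≤ μ)
    (hQ : Q.PosDef)
    (hLMI : (-(Matrix.fromBlocks
        (Q * A + Aᵀ * Q - Y * D - Dᵀ * Yᵀ + (ν * μ ^ 2 + 2 * ε) • (1 : Matrix (Fin n) (Fin n) ℝ))
        Q Q (-(ν • (1 : Matrix (Fin n) (Fin n) ℝ))))).PosSemidef)
    (s : ℝ)
    -- `|s| ⬝ ‖B‖ ≤ μ`, expressed via the Euclidean operator norm characterization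
    (hs : ∀ x : Fin n → ℝ, s ^ 2 * ((B.mulVec x) ⬝ᵥ (B.mulVec x)) ≤ μ ^ 2 * (x ⬝ᵥ x))
    (e : Fin n → ℝ) :
    e ⬝ᵥ ((Q * (A - (Q⁻¹ * Y) * D) + (A - (Q⁻¹ * Y) * D)ᵀ * Q).mulVec e) +
        2 * s * (e ⬝ᵥ ((Q * B).mulVec e)) ≤ -2 * ε * (e ⬝ᵥ e) := by
  have hdet : IsUnit Q.det := hQ.det_pos.ne'.isUnit
  have hQsymm : Qᵀ = Q := by
    rw [← Matrix.conjTranspose_eq_transpose_of_trivial]; exact hQ.1.eq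
  have hinvsymm : Q⁻¹ᵀ = Q⁻¹ := by rw [Matrix.transpose_nonsing_inv, hQsymm]
  have dsn : ∀ v : Fin n → ℝ, 0 ≤ v ⬝ᵥ v := fun v =>
    Finset.sum_nonneg fun i _ => mul_self_nonneg _
  -- simplify the matrix in the goal
  have hmat : Q * (A - (Q⁻¹ * Y) * D) + (A - (Q⁻¹ * Y) * D)ᵀ * Q
      = Q * A + Aᵀ * Q - Y * D - Dᵀ * Yᵀ := by
    rw [Matrix.mul_sub, Matrix.transpose_sub, Matrix.sub_mul,
      Matrix.transpose_mul, Matrix.transpose_mul, hinvsymm]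
    have h1 : Q * (Q⁻¹ * Y * D) = Y * D := by
      rw [← Matrix.mul_assoc, ← Matrix.mul_assoc, Matrix.mul_nonsing_inv _ hdet,
        Matrix.one_mul]
    have h2 : Dᵀ * (Yᵀ * Q⁻¹) * Q = Dᵀ * Yᵀ := by
      rw [Matrix.mul_assoc, Matrix.mul_assoc, Matrix.nonsing_inv_mul _ hdet,
        Matrix.mul_one]
    rw [h1, h2]; abel
  rw [hmat]
  -- abbreviations
  set q : Fin n → ℝ := Q.mulVec e with hq
  set b : Fin n → ℝ := B.mulVec e with hb
  -- symmetry facts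
  have hsymm1 : ∀ v : Fin n → ℝ, e ⬝ᵥ Q.mulVec v = q ⬝ᵥ v := by
    intro v
    rw [Matrix.dotProduct_mulVec, ← Matrix.mulVec_transpose, hQsymm]
  have hQQ : e ⬝ᵥ Q.mulVec q = q ⬝ᵥ q := hsymm1 q
  have hQB : e ⬝ᵥ (Q * B).mulVec e = q ⬝ᵥ b := by
    rw [← Matrix.mulVec_mulVec, hsymm1]
  rw [hQB]
  simp only [Matrix.add_mulVec, Matrix.sub_mulVec, dotProduct_add,
    dotProduct_sub]
  -- the quadratic form inequality from the LMI, at the witness (e, ν⁻¹ • q)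
  have hkey := hLMI.dotProduct_mulVec_nonneg (Sum.elim e (ν⁻¹ • q))
  rw [Matrix.neg_mulVec, dotProduct_neg, Matrix.fromBlocks_mulVec] at hkey
  simp only [star_trivial, Sum.elim_comp_inl, Sum.elim_comp_inr,
    sumElim_dotProduct_sumElim, Matrix.add_mulVec, Matrix.sub_mulVec,
    Matrix.smul_mulVec, Matrix.one_mulVec, Matrix.mulVec_smul, Matrix.neg_mulVec,
    dotProduct_add, dotProduct_sub, dotProduct_smul,
    smul_dotProduct, dotProduct_neg, smul_eq_mul, neg_add_rev, neg_neg,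
    neg_sub] at hkey
  rw [← hq, hQQ] at hkey
  have hc : ν⁻¹ * (ν * (ν⁻¹ * (q ⬝ᵥ q))) = ν⁻¹ * (q ⬝ᵥ q) := by
    field_simp
  have hkey' : e ⬝ᵥ (Q * A).mulVec e + e ⬝ᵥ (Aᵀ * Q).mulVec e - e ⬝ᵥ (Y * D).mulVec e
      - e ⬝ᵥ (Dᵀ * Yᵀ).mulVec e + (ν * μ ^ 2 + 2 * ε) * (e ⬝ᵥ e) + ν⁻¹ * (q ⬝ᵥ q) ≤ 0 := by
    linarith [hkey, hc]
  -- Young's inequality for the cross term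
  have hyoung : 0 ≤ (q - (ν * s) • b) ⬝ᵥ (q - (ν * s) • b) := dsn _
  have hexp : (q - (ν * s) • b) ⬝ᵥ (q - (ν * s) • b)
      = q ⬝ᵥ q - 2 * (ν * s) * (q ⬝ᵥ b) + (ν * s) ^ 2 * (b ⬝ᵥ b) := by
    simp only [dotProduct_sub, sub_dotProduct, dotProduct_smul,
      smul_dotProduct, smul_eq_mul, dotProduct_comm b q]
    ring
  have hy : 2 * (ν * s) * (q ⬝ᵥ b) ≤ q ⬝ᵥ q + (ν * s) ^ 2 * (b ⬝ᵥ b) := by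
    rw [hexp] at hyoung; linarith
  have hBs := hs e
  have hνν : ν * ν⁻¹ = 1 := mul_inv_cancel₀ hν.ne'
  -- multiply the goal by ν > 0
  rw [← mul_le_mul_iff_right₀ hν]
  have hBs' : ν * (s ^ 2 * (b ⬝ᵥ b)) ≤ ν * (μ ^ 2 * (e ⬝ᵥ e)) :=
    mul_le_mul_of_nonneg_left hBs hν.le
  have hkeyν := mul_le_mul_of_nonneg_left hkey' hν.le
  rw [mul_zero] at hkeyν
  have hc2 : ν * (ν⁻¹ * (q ⬝ᵥ q)) = q ⬝ᵥ q := by field_simp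
  have hBs'' := mul_le_mul_of_nonneg_left hBs' hν.le
  nlinarith [hkeyν, hy, hBs'', hc2]
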